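/- Let X be a δ-hyperbolic geodesic metric space and U a closed K-quasiconvex subset. Let x, y ∈ X and α a k-quasi-geodesic joining x and y. If P: X → U is a nearest point projection map, then the Hausdorff distance between P(α) and any geodesic [P(x), P(y)] is bounded by a constant D = D(δ, K, k) depending only on δ, K, k. -/

import Mathlib

open Metric Set

/-- A geodesic from `a` to `b` in a metric space, parametrized by arc length
on the interval `[0, dist a b]`. -/
def IsGeodesicFrom {X : Type*} [MetricSpace X] (γ : ℝ → X) (a b : X) : Prop :=
  γ 0 = a ∧ γ (dist a b) = b ∧
    ∀ s ∈ Set.Icc (0 : ℝ) (dist a b), ∀ t ∈ Set.Icc (0 : ℝ) (dist a b),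
      dist (γ s) (γ t) = |s - t|

/-- A geodesic metric space: any two points are joined by a geodesic. -/
def GeodesicMetricSpace (X : Type*) [MetricSpace X] : Prop :=
  ∀ a b : X, ∃ γ : ℝ → X, IsGeodesicFrom γ a b

/-- The image of a geodesic segment from `a` to `b`. -/
def geodImage {X : Type*} [MetricSpace X] (γ : ℝ → X) (a b : X) : Set X :=
  γ '' Set.Icc 0 (dist a b)

/-- `X` is `δ`-hyperbolic: every geodesic triangle is `δ`-slim, i.e. each side is
contained in the `δ`-neighbourhood of the union of the other two sides. -/
def DeltaHyp (X : Type*) [MetricSpace X] (δ : ℝ) : Prop :=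
  ∀ (a b c : X) (γ₁ γ₂ γ₃ : ℝ → X),
    IsGeodesicFrom γ₁ a b → IsGeodesicFrom γ₂ b c → IsGeodesicFrom γ₃ a c →
      ∀ x ∈ geodImage γ₃ a c,
        Metric.infDist x (geodImage γ₁ a b ∪ geodImage γ₂ b c) ≤ δ

/-- `U` is a `K`-quasiconvex subset: every geodesic joining two points of `U`
lies in the (closed) `K`-neighbourhood of `U`. -/
def QuasiconvexSet {X : Type*} [MetricSpace X] (K : ℝ) (U : Set X) : Prop :=
  ∀ a ∈ U, ∀ b ∈ U, ∀ γ : ℝ → X, IsGeodesicFrom γ a b →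
    ∀ x ∈ geodImage γ a b, Metric.infDist x U ≤ K

/-- `u` is a nearest point projection of `x` on `U`. -/
def IsNPProj {X : Type*} [MetricSpace X] (x : X) (U : Set X) (u : X) : Prop :=
  u ∈ U ∧ ∀ u' ∈ U, dist x u ≤ dist x u'

/-- The set of all nearest point projections of points of `V` onto `U`
(denoted `P_U(V)` in the paper). -/
def projSet {X : Type*} [MetricSpace X] (U V : Set X) : Set X :=
  {u | ∃ v ∈ V, IsNPProj v U u}

open Real
section Aux
variable {X : Type*} [MetricSpace X]

lemma start_mem_geodImage {γ : ℝ → X} {a b : X} (h : IsGeodesicFrom γ a b) :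
    a ∈ geodImage γ a b :=
  ⟨0, ⟨le_refl _, dist_nonneg⟩, h.1⟩

lemma end_mem_geodImage {γ : ℝ → X} {a b : X} (h : IsGeodesicFrom γ a b) :
    b ∈ geodImage γ a b :=
  ⟨dist a b, ⟨dist_nonneg, le_refl _⟩, h.2.1⟩

lemma geodImage_nonempty {γ : ℝ → X} {a b : X} (h : IsGeodesicFrom γ a b) :
    (geodImage γ a b).Nonempty := ⟨a, start_mem_geodImage h⟩

lemma geod_dist_start {γ : ℝ → X} {a b : X} (h : IsGeodesicFrom γ a b)
    {s : ℝ} (hs : s ∈ Icc 0 (dist a b)) : dist a (γ s) = s := by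
  have := h.2.2 0 ⟨le_refl _, dist_nonneg⟩ s hs
  rw [h.1] at this
  rw [this, abs_sub_comm, sub_zero, abs_of_nonneg hs.1]

lemma geod_dist_end {γ : ℝ → X} {a b : X} (h : IsGeodesicFrom γ a b)
    {s : ℝ} (hs : s ∈ Icc 0 (dist a b)) : dist (γ s) b = dist a b - s := by
  have := h.2.2 s hs (dist a b) ⟨dist_nonneg, le_refl _⟩
  rw [h.2.1] at this
  rw [this, abs_of_nonpos (by linarith [hs.2]), neg_sub]

/-- A subsegment of a geodesic is a geodesic. -/
lemma IsGeodesicFrom.subseg {γ : ℝ → X} {a b : X} (h : IsGeodesicFrom γ a b)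
    {r₁ r₂ : ℝ} (h₁ : r₁ ∈ Icc 0 (dist a b)) (h₂ : r₂ ∈ Icc 0 (dist a b)) (hle : r₁ ≤ r₂) :
    dist (γ r₁) (γ r₂) = r₂ - r₁ ∧ IsGeodesicFrom (fun u => γ (r₁ + u)) (γ r₁) (γ r₂) := by
  have hd : dist (γ r₁) (γ r₂) = r₂ - r₁ := by
    rw [h.2.2 r₁ h₁ r₂ h₂, abs_of_nonpos (by linarith), neg_sub]
  refine ⟨hd, ?_, ?_, ?_⟩
  · simp
  · rw [hd]; congr 1; ring
  · intro s hs t ht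
    rw [hd] at hs ht
    have hs' : r₁ + s ∈ Icc 0 (dist a b) := ⟨by linarith [hs.1, h₁.1], by linarith [hs.2, h₂.2]⟩
    have ht' : r₁ + t ∈ Icc 0 (dist a b) := ⟨by linarith [ht.1, h₁.1], by linarith [ht.2, h₂.2]⟩
    rw [h.2.2 _ hs' _ ht']
    congr 1; ring

lemma geod_continuousOn {γ : ℝ → X} {a b : X} (h : IsGeodesicFrom γ a b) :
    ContinuousOn γ (Icc 0 (dist a b)) := by
  have : LipschitzOnWith 1 γ (Icc 0 (dist a b)) := by
    intro s hs t ht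
    rw [edist_dist, edist_dist, h.2.2 s hs t ht]
    simp [Real.dist_eq]
  exact this.continuousOn

/-- from infDist ≤ r and nonempty, find a point within r + ε -/
lemma exists_near_of_infDist {s : Set X} (hs : s.Nonempty) {x : X} {r ε : ℝ}
    (h : infDist x s ≤ r) (hε : 0 < ε) : ∃ y ∈ s, dist x y < r + ε := by
  rw [← infDist_lt_iff hs]; linarith

/-- transition point on a geodesic: a point where the infDists to two sets containing the
endpoints agree. -/
lemma exists_transition {γ : ℝ → X} {a c : X} (h : IsGeodesicFrom γ a c) (S₁ S₂ : Set X)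
    (h₁ : a ∈ S₁) (h₂ : c ∈ S₂) :
    ∃ r ∈ Icc (0:ℝ) (dist a c), infDist (γ r) S₁ = infDist (γ r) S₂ := by
  set f : ℝ → ℝ := fun r => infDist (γ r) S₁ - infDist (γ r) S₂ with hf
  have hcont : ContinuousOn f (Icc 0 (dist a c)) := by
    apply ContinuousOn.sub
    · exact (continuous_infDist_pt S₁).comp_continuousOn (geod_continuousOn h)
    · exact (continuous_infDist_pt S₂).comp_continuousOn (geod_continuousOn h)
  have h0 : f 0 ≤ 0 := by
    have : infDist (γ 0) S₁ = 0 := by rw [h.1]; exact infDist_zero_of_mem h₁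
    simp only [hf, this]
    simp [infDist_nonneg]
  have hL : 0 ≤ f (dist a c) := by
    have : infDist (γ (dist a c)) S₂ = 0 := by rw [h.2.1]; exact infDist_zero_of_mem h₂
    simp only [hf, this]
    simp [infDist_nonneg]
  have := intermediate_value_Icc (dist_nonneg : (0:ℝ) ≤ dist a c) hcont
  have h0mem : (0:ℝ) ∈ Icc (f 0) (f (dist a c)) := ⟨h0, hL⟩
  obtain ⟨r, hr, hfr⟩ := this h0mem
  refine ⟨r, hr, ?_⟩
  have hfr0 : infDist (γ r) S₁ - infDist (γ r) S₂ = 0 := hfr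
  linarith

/-- combined with hyperbolicity: a point on the third side δ-close to both other sides. -/
lemma exists_transition_pt {δ : ℝ} (hHyp : DeltaHyp X δ) {a b c : X} {γ₁ γ₂ γ₃ : ℝ → X}
    (hg₁ : IsGeodesicFrom γ₁ a b) (hg₂ : IsGeodesicFrom γ₂ b c) (hg₃ : IsGeodesicFrom γ₃ a c) :
    ∃ r ∈ Icc (0:ℝ) (dist a c), infDist (γ₃ r) (geodImage γ₁ a b) ≤ δ ∧
      infDist (γ₃ r) (geodImage γ₂ b c) ≤ δ := by
  obtain ⟨r, hr, heq⟩ := exists_transition hg₃ (geodImage γ₁ a b) (geodImage γ₂ b c)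
    (start_mem_geodImage hg₁) (end_mem_geodImage hg₂)
  have hun := hHyp a b c γ₁ γ₂ γ₃ hg₁ hg₂ hg₃ (γ₃ r) ⟨r, hr, rfl⟩
  have hne : (geodImage γ₁ a b ∪ geodImage γ₂ b c).Nonempty :=
    (geodImage_nonempty hg₁).mono subset_union_left
  have key : infDist (γ₃ r) (geodImage γ₁ a b) ≤ δ := by
    apply le_of_forall_pos_le_add
    intro ε hε
    obtain ⟨w, hw, hdw⟩ := exists_near_of_infDist hne hun hε
    rcases hw with hw | hw
    · exact le_trans (infDist_le_dist_of_mem hw) hdw.le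
    · rw [heq]; exact le_trans (infDist_le_dist_of_mem hw) hdw.le
  exact ⟨r, hr, key, heq ▸ key⟩

end Aux

section Proj
variable {X : Type*} [MetricSpace X] {δ K : ℝ}

/-- Lemma A: reverse triangle inequality through the projection. -/
lemma proj_reverse_tri (hGeo : GeodesicMetricSpace X) (hHyp : DeltaHyp X δ)
    {U : Set X} (hU : QuasiconvexSet K U) {z u Pz : X}
    (hPz : IsNPProj z U Pz) (hu : u ∈ U) :
    dist z Pz + dist Pz u ≤ dist z u + (4*δ + 2*K) := by
  obtain ⟨g₁, hg₁⟩ := hGeo z Pz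
  obtain ⟨g₂, hg₂⟩ := hGeo Pz u
  obtain ⟨g₃, hg₃⟩ := hGeo z u
  obtain ⟨r₀, hr₀, hd₁, hd₂⟩ := exists_transition_pt hHyp hg₁ hg₂ hg₃
  rw [add_comm (dist z u)]
  rw [← sub_le_iff_le_add]
  apply le_of_forall_pos_le_add
  intro ε hε
  have hε6 : 0 < ε/6 := by linarith
  obtain ⟨p, hp, hdp⟩ := exists_near_of_infDist (geodImage_nonempty hg₁) hd₁ hε6
  obtain ⟨q, hq, hdq⟩ := exists_near_of_infDist (geodImage_nonempty hg₂) hd₂ hε6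
  -- q is K-close to U
  have hqU : infDist q U ≤ K := hU Pz hPz.1 u hu g₂ hg₂ q hq
  have hUne : U.Nonempty := ⟨Pz, hPz.1⟩
  obtain ⟨u', hu', hdu'⟩ := exists_near_of_infDist hUne hqU hε6
  set m := g₃ r₀ with hm
  have hzm : dist z m = r₀ := geod_dist_start hg₃ hr₀
  have hmu : dist m u = dist z u - r₀ := geod_dist_end hg₃ hr₀
  -- h1 : dist z Pz ≤ r₀ + (δ + ε/6) + (K + ε/6)
  have h1 : dist z Pz ≤ r₀ + (δ + ε/6) + (K + ε/6) := by
    have := hPz.2 u' hu'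
    have hch : dist z u' ≤ dist z m + dist m q + dist q u' := dist_triangle4 z m q u'
    nlinarith [dist_nonneg (x := z) (y := m)]
  obtain ⟨s, hs, hps⟩ := hp
  have hzp : dist z p = s := by rw [← hps]; exact geod_dist_start hg₁ hs
  have hpPz : dist p Pz = dist z Pz - s := by rw [← hps]; exact geod_dist_end hg₁ hs
  have h2 : r₀ - (δ + ε/6) ≤ s := by
    have : dist z m ≤ dist z p + dist p m := dist_triangle z p m
    rw [hzm, hzp] at this
    have h' : dist p m = dist m p := dist_comm p m
    linarith
  have h3 : dist Pz u ≤ (dist z Pz - s) + (δ + ε/6) + (dist z u - r₀) := by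
    have := dist_triangle4 Pz p m u
    have hc : dist Pz p = dist p Pz := dist_comm Pz p
    have hc2 : dist p m = dist m p := dist_comm p m
    linarith [hpPz, hmu, hdp]
  linarith
end Proj

section Proj2
variable {X : Type*} [MetricSpace X] {δ K : ℝ}

/-- Lemma B: coarse Lipschitz property of projection. -/
lemma proj_lipschitz (hGeo : GeodesicMetricSpace X) (hHyp : DeltaHyp X δ)
    {U : Set X} (hU : QuasiconvexSet K U) {z w Pz Pw : X}
    (hPz : IsNPProj z U Pz) (hPw : IsNPProj w U Pw) :
    dist Pz Pw ≤ 2 * dist z w + (4*δ + 2*K) := by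
  have hA := proj_reverse_tri hGeo hHyp hU hPz hPw.1
  have h1 : dist z Pw ≤ dist z w + dist w Pw := dist_triangle z w Pw
  have h2 : dist w Pw ≤ dist w Pz := hPw.2 Pz hPz.1
  have h3 : dist w Pz ≤ dist w z + dist z Pz := dist_triangle w z Pz
  have h4 : dist w z = dist z w := dist_comm w z
  linarith

/-- Chain-log lemma: any point on a geodesic joining the ends of a chain of `N ≤ 2^d`
steps of size `≤ c` is within `(δ+ε) d + c` of the chain. -/
lemma chain_log (hδ : 0 ≤ δ) (hGeo : GeodesicMetricSpace X) (hHyp : DeltaHyp X δ)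
    {c ε : ℝ} (hc : 0 ≤ c) (hε : 0 < ε) :
    ∀ d : ℕ, ∀ N : ℕ, N ≤ 2^d → ∀ p : ℕ → X,
      (∀ i : ℕ, i+1 ≤ N → dist (p i) (p (i+1)) ≤ c) →
      ∀ γ : ℝ → X, IsGeodesicFrom γ (p 0) (p N) → ∀ m ∈ geodImage γ (p 0) (p N),
        ∃ i ≤ N, dist m (p i) ≤ (δ+ε)*d + c := by
  intro d
  induction d with
  | zero =>
    intro N hN p hstep γ hγ m hm
    refine ⟨0, Nat.zero_le _, ?_⟩
    obtain ⟨s, hs, hsm⟩ := hm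
    have : dist (p 0) m = s := by rw [← hsm]; exact geod_dist_start hγ hs
    have hb : dist (p 0) (p N) ≤ c := by
      interval_cases N
      · simp [hc]
      · exact hstep 0 (le_refl _)
    rw [dist_comm]
    simp only [Nat.cast_zero, mul_zero, zero_add]
    linarith [hs.2]
  | succ d ih =>
    intro N hN p hstep γ hγ m hm
    by_cases hN1 : N ≤ 1
    · obtain ⟨i, hi, hb⟩ := ih N (le_trans hN1 (Nat.one_le_two_pow)) p hstep γ hγ m hm
      refine ⟨i, hi, le_trans hb ?_⟩
      have : (δ+ε) * d ≤ (δ+ε) * (d+1) := by nlinarith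
      push_cast
      linarith
    · push_neg at hN1
      set M := (N+1)/2 with hM
      have hpow : (2:ℕ)^(d+1) = 2 * 2^d := by ring
      have hM1 : M ≤ 2^d := by omega
      have hM2 : N - M ≤ 2^d := by omega
      have hMN : M ≤ N := by omega
      obtain ⟨g₁, hg₁⟩ := hGeo (p 0) (p M)
      obtain ⟨g₂, hg₂⟩ := hGeo (p M) (p N)
      have hun := hHyp (p 0) (p M) (p N) g₁ g₂ γ hg₁ hg₂ hγ m hm
      have hne : (geodImage g₁ (p 0) (p M) ∪ geodImage g₂ (p M) (p N)).Nonempty :=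
        (geodImage_nonempty hg₁).mono subset_union_left
      obtain ⟨m', hm', hdm'⟩ := exists_near_of_infDist hne hun hε
      rcases hm' with hm' | hm'
      · obtain ⟨i, hi, hb⟩ := ih M hM1 p (fun i h => hstep i (le_trans h hMN)) g₁ hg₁ m' hm'
        refine ⟨i, le_trans hi hMN, ?_⟩
        have := dist_triangle m m' (p i)
        push_cast
        nlinarith
      · set q : ℕ → X := fun j => p (M + j) with hq
        have hq0 : q 0 = p M := by simp [hq]
        have hqN : q (N - M) = p N := by simp [hq]; congr 1; omega
        have hg₂' : IsGeodesicFrom g₂ (q 0) (q (N - M)) := by rw [hq0, hqN]; exact hg₂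
        have hm'' : m' ∈ geodImage g₂ (q 0) (q (N - M)) := by rw [hq0, hqN]; exact hm'
        obtain ⟨j, hj, hb⟩ := ih (N - M) hM2 q
          (fun j h => by
            have : M + j + 1 ≤ N := by omega
            simpa [hq, Nat.add_assoc] using hstep (M + j) this) g₂ hg₂' m' hm''
        refine ⟨M + j, by omega, ?_⟩
        have := dist_triangle m m' (q j)
        simp only [hq] at this ⊢
        push_cast
        nlinarith
end Proj2

section GeodProj
variable {X : Type*} [MetricSpace X] {δ K : ℝ}

lemma geod_dist_add {g : ℝ → X} {a b w : X} (hg : IsGeodesicFrom g a b)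
    (hw : w ∈ geodImage g a b) : dist a w + dist w b = dist a b := by
  obtain ⟨s, hs, rfl⟩ := hw
  rw [geod_dist_start hg hs, geod_dist_end hg hs]; ring

/-- Projection of a point of a geodesic is close to the geodesic joining the projections
of the endpoints. -/
lemma proj_of_geod_pt (hδ : 0 ≤ δ) (hK : 0 ≤ K)
    (hGeo : GeodesicMetricSpace X) (hHyp : DeltaHyp X δ)
    {U : Set X} (hU : QuasiconvexSet K U) {P : X → X} (hP : ∀ z : X, IsNPProj z U (P z))
    {x y : X} {lam : ℝ → X} (hlam : IsGeodesicFrom lam x y)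
    {γ : ℝ → X} (hγ : IsGeodesicFrom γ (P x) (P y)) :
    ∀ z' ∈ geodImage lam x y, infDist (P z') (geodImage γ (P x) (P y)) ≤ 8*δ + 4*K := by
  intro z' hz'
  apply le_of_forall_pos_le_add
  intro ε hε
  have hε' : 0 < ε/4 := by linarith
  obtain ⟨g₁, hg₁⟩ := hGeo x (P y)
  obtain ⟨g₂, hg₂⟩ := hGeo (P y) y
  obtain ⟨g₃, hg₃⟩ := hGeo x (P x)
  have hun₁ := hHyp x (P y) y g₁ g₂ lam hg₁ hg₂ hlam z' hz'
  have hne₁ : (geodImage g₁ x (P y) ∪ geodImage g₂ (P y) y).Nonempty :=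
    (geodImage_nonempty hg₁).mono subset_union_left
  obtain ⟨w₁, hw₁, hdw₁⟩ := exists_near_of_infDist hne₁ hun₁ hε'
  rcases hw₁ with hw₁ | hw₁
  · -- w₁ on [x, P y] : use the second triangle (x, P x, P y)
    have hun₂ := hHyp x (P x) (P y) g₃ γ g₁ hg₃ hγ hg₁ w₁ hw₁
    have hne₂ : (geodImage g₃ x (P x) ∪ geodImage γ (P x) (P y)).Nonempty :=
      (geodImage_nonempty hg₃).mono subset_union_left
    obtain ⟨w₂, hw₂, hdw₂⟩ := exists_near_of_infDist hne₂ hun₂ hε'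
    have hz'w₂ : dist z' w₂ ≤ 2*δ + 2*(ε/4) := by
      have := dist_triangle z' w₁ w₂
      linarith
    rcases hw₂ with hw₂ | hw₂
    · -- w₂ on [x, P x]
      have hsum : dist x w₂ + dist w₂ (P x) = dist x (P x) := geod_dist_add hg₃ hw₂
      have h1 : dist z' (P z') ≤ dist z' (P x) := (hP z').2 (P x) (hP x).1
      have h2 : dist z' (P x) ≤ dist z' w₂ + dist w₂ (P x) := dist_triangle _ _ _
      have h3 : dist x (P z') ≤ dist x w₂ + dist w₂ z' + dist z' (P z') := dist_triangle4 _ _ _ _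
      have hA := proj_reverse_tri hGeo hHyp hU (hP x) (hP z').1
      have h4 : dist w₂ z' = dist z' w₂ := dist_comm _ _
      have h5 : infDist (P z') (geodImage γ (P x) (P y)) ≤ dist (P z') (P x) :=
        infDist_le_dist_of_mem (start_mem_geodImage hγ)
      have h6 : dist (P z') (P x) = dist (P x) (P z') := dist_comm _ _
      linarith
    · -- w₂ on [P x, P y] : quasiconvexity
      have hqU : infDist w₂ U ≤ K := hU (P x) (hP x).1 (P y) (hP y).1 γ hγ w₂ hw₂
      obtain ⟨u', hu', hdu'⟩ := exists_near_of_infDist ⟨P x, (hP x).1⟩ hqU hε'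
      have hA := proj_reverse_tri hGeo hHyp hU (hP z') hu'
      have h1 : dist z' u' ≤ dist z' w₂ + dist w₂ u' := dist_triangle _ _ _
      have h2 : dist (P z') w₂ ≤ dist (P z') u' + dist u' w₂ := dist_triangle _ _ _
      have h3 : dist u' w₂ = dist w₂ u' := dist_comm _ _
      have h5 : infDist (P z') (geodImage γ (P x) (P y)) ≤ dist (P z') w₂ :=
        infDist_le_dist_of_mem hw₂
      have h6 : (0:ℝ) ≤ dist z' (P z') := dist_nonneg
      linarith
  · -- w₁ on [P y, y]
    have hsum : dist (P y) w₁ + dist w₁ y = dist (P y) y := geod_dist_add hg₂ hw₁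
    have h1 : dist z' (P z') ≤ dist z' (P y) := (hP z').2 (P y) (hP y).1
    have h2 : dist z' (P y) ≤ dist z' w₁ + dist w₁ (P y) := dist_triangle _ _ _
    have h3 : dist y (P z') ≤ dist y w₁ + dist w₁ z' + dist z' (P z') := dist_triangle4 _ _ _ _
    have hA := proj_reverse_tri hGeo hHyp hU (hP y) (hP z').1
    have h4 : dist w₁ z' = dist z' w₁ := dist_comm _ _
    have h4' : dist w₁ (P y) = dist (P y) w₁ := dist_comm _ _
    have h4'' : dist y w₁ = dist w₁ y := dist_comm _ _
    have h4''' : dist y (P y) = dist (P y) y := dist_comm _ _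
    have h5 : infDist (P z') (geodImage γ (P x) (P y)) ≤ dist (P z') (P y) :=
      infDist_le_dist_of_mem (end_mem_geodImage hγ)
    have h6 : dist (P z') (P y) = dist (P y) (P z') := dist_comm _ _
    linarith
end GeodProj

section Chains
variable {X : Type*} [MetricSpace X]

/-- concatenation of chains -/
lemma chain_append {c : ℝ} {p q : ℕ → X} {N₁ N₂ : ℕ} (hpq : p N₁ = q 0)
    (hp : ∀ j, j+1 ≤ N₁ → dist (p j) (p (j+1)) ≤ c)
    (hq : ∀ j, j+1 ≤ N₂ → dist (q j) (q (j+1)) ≤ c) :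
    ∃ r : ℕ → X, r 0 = p 0 ∧ r (N₁+N₂) = q N₂ ∧
      (∀ j, j+1 ≤ N₁+N₂ → dist (r j) (r (j+1)) ≤ c) ∧
      (∀ j ≤ N₁+N₂, (∃ i ≤ N₁, r j = p i) ∨ (∃ i ≤ N₂, r j = q i)) := by
  refine ⟨fun j => if j ≤ N₁ then p j else q (j - N₁), by simp, ?_, ?_, ?_⟩
  · by_cases h : N₁ + N₂ ≤ N₁
    · have hN₂ : N₂ = 0 := by omega
      simp [hN₂, hpq]
    · simp only [if_neg h]
      congr 1; omega
  · intro j hj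
    by_cases h1 : j + 1 ≤ N₁
    · simp only [if_pos h1, if_pos (by omega : j ≤ N₁)]
      exact hp j h1
    · have hjq : (if j ≤ N₁ then p j else q (j - N₁)) = q (j - N₁) := by
        by_cases h2 : j ≤ N₁
        · have : j = N₁ := by omega
          simp [this, hpq]
        · simp [h2]
      simp only []
      rw [hjq, if_neg (by omega : ¬ j + 1 ≤ N₁)]
      have : j + 1 - N₁ = (j - N₁) + 1 := by omega
      rw [this]
      exact hq (j - N₁) (by omega)
  · intro j hj
    by_cases h1 : j ≤ N₁
    · exact Or.inl ⟨j, h1, by simp [h1]⟩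
    · exact Or.inr ⟨j - N₁, by omega, by simp [h1]⟩

/-- subdivision of a geodesic into unit-size steps -/
lemma geod_subdiv_chain {g : ℝ → X} {a b : X} (hg : IsGeodesicFrom g a b) :
    ∃ p : ℕ → X, p 0 = a ∧ p ⌈dist a b⌉₊ = b ∧
      (∀ j, j+1 ≤ ⌈dist a b⌉₊ → dist (p j) (p (j+1)) ≤ 1) ∧
      (∀ j, p j ∈ geodImage g a b) := by
  set d := dist a b with hd
  set n := ⌈d⌉₊ with hn
  have hd0 : 0 ≤ d := dist_nonneg
  have hdn : d ≤ n := Nat.le_ceil d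
  refine ⟨fun j => g (min d (j * d / n)), ?_, ?_, ?_, ?_⟩
  · simp [hg.1, hd0]
  · by_cases h : n = 0
    · have hd00 : d = 0 := le_antisymm (by simpa [h] using hdn) hd0
      have hb : b = g 0 := by rw [← hg.2.1, ← hd, hd00]
      simp [h, hd00, hb]
    · have hn0 : (0:ℝ) < n := by positivity
      have : (n:ℝ) * d / n = d := by field_simp
      simp [this, hg.2.1]
      exact hg.2.1
  · intro j hj
    have hn0 : (0:ℝ) < n := by
      have : 1 ≤ n := by omega
      exact_mod_cast Nat.lt_of_lt_of_le Nat.zero_lt_one this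
    have hmem : ∀ i : ℕ, i ≤ n → min d ((i:ℝ) * d / n) = (i:ℝ) * d / n ∧
        (i:ℝ) * d / n ∈ Icc 0 d := by
      intro i hi
      have h1 : (i:ℝ) * d / n ≤ d := by
        rw [div_le_iff₀ hn0]
        have : (i:ℝ) ≤ n := by exact_mod_cast hi
        nlinarith
      have h2 : 0 ≤ (i:ℝ) * d / n := by positivity
      exact ⟨min_eq_right h1, ⟨h2, h1⟩⟩
    obtain ⟨e1, m1⟩ := hmem j (by omega)
    obtain ⟨e2, m2⟩ := hmem (j+1) (by exact_mod_cast hj)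
    push_cast at e2 m2 ⊢
    simp only [min_comm d _] at e1 e2 ⊢
    rw [e1, e2, hg.2.2 _ m1 _ m2]
    have : (j:ℝ) * d / n - ((j:ℝ)+1) * d / n = -(d/n) := by ring
    rw [this, abs_neg, abs_of_nonneg (by positivity)]
    rw [div_le_one hn0]
    exact hdn
  · intro j
    refine ⟨min d (j * d / n), ⟨le_min hd0 (by positivity), min_le_left _ _⟩, rfl⟩

end Chains

section QGChain
variable {X : Type*} [MetricSpace X]

/-- sampling a quasigeodesic at unit-time intervals gives a chain with steps ≤ 2k -/
lemma qg_sample_chain {α : ℝ → X} {T k : ℝ} (hk : 1 ≤ k)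
    (hqg : ∀ s ∈ Icc (0:ℝ) T, ∀ t ∈ Icc (0:ℝ) T,
      dist (α s) (α t) ≤ k * |s - t| + k)
    {s₁ s₂ : ℝ} (hs₁ : s₁ ∈ Icc (0:ℝ) T) (hs₂ : s₂ ∈ Icc (0:ℝ) T) :
    ∃ p : ℕ → X, p 0 = α s₁ ∧ p ⌈|s₂ - s₁|⌉₊ = α s₂ ∧
      (∀ j, j+1 ≤ ⌈|s₂ - s₁|⌉₊ → dist (p j) (p (j+1)) ≤ 2*k) ∧
      (∀ j, ∃ s ∈ Icc (0:ℝ) T, p j = α s) := by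
  set Δ := s₂ - s₁ with hΔ
  set n := ⌈|Δ|⌉₊ with hn
  have hΔn : |Δ| ≤ n := Nat.le_ceil _
  have htime : ∀ i : ℕ, i ≤ n → s₁ + (i:ℝ) * Δ / n ∈ Icc (0:ℝ) T := by
    intro i hi
    by_cases h : n = 0
    · have : Δ = 0 := by
        have h2 := hΔn; rw [h] at h2; simpa using h2
      simp [h, this]
      exact hs₁
    · have hn0 : (0:ℝ) < n := by positivity
      have hfrac : 0 ≤ (i:ℝ)/n ∧ (i:ℝ)/n ≤ 1 := by
        constructor
        · positivity
        · rw [div_le_one hn0]; exact_mod_cast hi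
      have key : s₁ + (i:ℝ) * Δ / n = (1 - (i:ℝ)/n) * s₁ + ((i:ℝ)/n) * s₂ := by
        field_simp; ring
      rw [key]
      constructor
      · have := hs₁.1; have := hs₂.1
        nlinarith [hfrac.1, hfrac.2]
      · have := hs₁.2; have := hs₂.2
        nlinarith [hfrac.1, hfrac.2]
  refine ⟨fun j => α (s₁ + (min j n : ℕ) * Δ / n), ?_, ?_, ?_, ?_⟩
  · simp
  · by_cases h : n = 0
    · have hΔ0 : Δ = 0 := by
        have h2 := hΔn; rw [h] at h2; simpa using h2
      have : s₂ = s₁ := by rw [hΔ] at hΔ0; linarith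
      simp [h, this]
    · have hn0 : (0:ℝ) < n := by positivity
      have : s₁ + (n:ℝ) * Δ / n = s₂ := by field_simp; rw [hΔ]; ring
      simp only [min_self, this]
  · intro j hj
    have hn0 : (0:ℝ) < n := by
      have : 1 ≤ n := by omega
      exact_mod_cast Nat.lt_of_lt_of_le Nat.zero_lt_one this
    have e1 : min j n = j := min_eq_left (by omega)
    have e2 : min (j+1) n = j+1 := min_eq_left (by omega)
    dsimp only
    rw [e1, e2]
    have m1 := htime j (by omega)
    have m2 := htime (j+1) (by omega)
    have := hqg _ m1 _ m2
    have harg : (s₁ + (j:ℝ) * Δ / n) - (s₁ + ((j:ℝ)+1) * Δ / n) = -(Δ/n) := by ring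
    push_cast at this ⊢
    rw [harg, abs_neg, abs_div, abs_of_nonneg hn0.le] at this
    have : dist (α (s₁ + (j:ℝ) * Δ / n)) (α (s₁ + ((j:ℝ)+1) * Δ / n)) ≤ k * 1 + k := by
      have h2 : |Δ|/(n:ℝ) ≤ 1 := by rw [div_le_one hn0]; exact hΔn
      have hk0 : (0:ℝ) ≤ k := by linarith
      nlinarith
    linarith [this]
  · intro j
    exact ⟨s₁ + (min j n : ℕ) * Δ / n, htime _ (min_le_right _ _), rfl⟩

end QGChain

section MorseA
variable {X : Type*} [MetricSpace X]

set_option maxHeartbeats 1000000 in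
lemma geod_near_qg {δ k : ℝ} (hδ : 0 ≤ δ) (hk : 1 ≤ k)
    (hGeo : GeodesicMetricSpace X) (hHyp : DeltaHyp X δ)
    {D₀ : ℝ}
    (hD₀ : ∀ R : ℝ, 0 ≤ R →
      R ≤ δ*(Real.logb 2 ((6*k+2)*R + (k^2+2*k+5)) + 1) + 2*k → R ≤ D₀)
    {x y : X} {α : ℝ → X} {T : ℝ} (hT : 0 ≤ T) (hα0 : α 0 = x) (hαT : α T = y)
    (hqgl : ∀ s ∈ Icc (0:ℝ) T, ∀ t ∈ Icc (0:ℝ) T, |s - t| ≤ k * dist (α s) (α t) + k^2)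
    (hqgu : ∀ s ∈ Icc (0:ℝ) T, ∀ t ∈ Icc (0:ℝ) T, dist (α s) (α t) ≤ k * |s - t| + k)
    {lam : ℝ → X} (hlam : IsGeodesicFrom lam x y) :
    ∀ r ∈ Icc (0:ℝ) (dist x y), infDist (lam r) (α '' Icc 0 T) ≤ D₀ := by
  set A := α '' Icc 0 T with hA
  have hAne : A.Nonempty := ⟨x, 0, ⟨le_refl _, hT⟩, hα0⟩
  set L := dist x y with hL
  set f : ℝ → ℝ := fun r => infDist (lam r) A with hf
  have hfc : ContinuousOn f (Icc 0 L) :=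
    (continuous_infDist_pt A).comp_continuousOn (geod_continuousOn hlam)
  obtain ⟨rs, hrs, hmax⟩ := (isCompact_Icc).exists_isMaxOn ⟨0, le_refl _, dist_nonneg⟩ hfc
  set R := f rs with hR
  have hR0 : 0 ≤ R := infDist_nonneg
  suffices hRD : R ≤ D₀ by
    intro r hr
    exact le_trans (hmax hr) hRD
  apply hD₀ R hR0
  set a := 6*k+2 with ha
  set b := k^2+2*k+5 with hb
  have hab1 : (1:ℝ) ≤ a*R + b := by nlinarith
  have hlogb0 : 0 ≤ Real.logb 2 (a*R+b) := Real.logb_nonneg one_lt_two hab1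
  set G := Real.logb 2 (a*R+b) + 1 with hG
  have hG1 : 1 ≤ G := by simp only [hG]; linarith
  have key : ∀ ε : ℝ, 0 < ε → ε ≤ 1 → R - ε ≤ (δ+ε)*G + 2*k := by
    intro ε hε hε1
    by_cases hRε : R ≤ ε
    · nlinarith
    push_neg at hRε
    set m := lam rs with hm
    have hfar : ∀ s ∈ Icc (0:ℝ) T, R ≤ dist m (α s) := by
      intro s hs
      exact infDist_le_dist_of_mem ⟨s, hs, rfl⟩
    -- LEFT endpoint construction
    have left : ∃ r₁, r₁ ∈ Icc 0 rs ∧ rs - r₁ ≤ 2*R ∧ r₁ ∈ Icc 0 L ∧ ∃ s₁ ∈ Icc (0:ℝ) T,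
        dist (lam r₁) (α s₁) ≤ R + ε ∧
        ∀ g₁ : ℝ → X, IsGeodesicFrom g₁ (lam r₁) (α s₁) →
          ∀ w ∈ geodImage g₁ (lam r₁) (α s₁), R - ε ≤ dist m w := by
      by_cases hc : rs ≤ 2*R
      · refine ⟨0, ⟨le_refl _, hrs.1⟩, by linarith, ⟨le_refl _, hrs.1.trans hrs.2⟩,
          0, ⟨le_refl _, hT⟩, ?_, ?_⟩
        · have h0 : lam 0 = α 0 := by rw [hlam.1, hα0]
          rw [h0, dist_self]; positivity
        · intro g₁ hg₁ w hw
          have h0 : lam 0 = α 0 := by rw [hlam.1, hα0]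
          obtain ⟨θ, hθ, rfl⟩ := hw
          have hz : dist (lam 0) (α 0) = 0 := by rw [h0, dist_self]
          rw [hz] at hθ
          have hθ0 : θ = 0 := le_antisymm hθ.2 hθ.1
          rw [hθ0, hg₁.1, h0]
          linarith [hfar 0 ⟨le_refl _, hT⟩]
      · push_neg at hc
        set r₁ := rs - 2*R with hr₁def
        have hr₁ : r₁ ∈ Icc 0 L := ⟨by simp only [hr₁def]; linarith, by
          have := hrs.2; simp only [hr₁def]; linarith⟩
        have hfr₁ : f r₁ ≤ R := hmax hr₁
        obtain ⟨w, hwA, hdw⟩ := exists_near_of_infDist hAne hfr₁ hε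
        obtain ⟨s₁, hs₁, rfl⟩ := hwA
        have hmr₁ : dist m (lam r₁) = 2*R := by
          rw [hlam.2.2 rs hrs r₁ hr₁]
          rw [abs_of_nonneg (by simp only [hr₁def]; linarith)]
          simp only [hr₁def]; ring
        refine ⟨r₁, ⟨by simp only [hr₁def]; linarith, by simp only [hr₁def]; linarith⟩,
          by simp only [hr₁def]; linarith, hr₁, s₁, hs₁, hdw.le, ?_⟩
        intro g₁ hg₁ w hw
        obtain ⟨θ, hθ, rfl⟩ := hw
        have h1 : dist (lam r₁) (g₁ θ) = θ := geod_dist_start hg₁ hθ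
        have h3 := dist_triangle m (g₁ θ) (lam r₁)
        have h4 : dist (g₁ θ) (lam r₁) = dist (lam r₁) (g₁ θ) := dist_comm _ _
        linarith [hθ.2, hdw, hmr₁]
    -- RIGHT endpoint construction
    have right : ∃ r₂, r₂ ∈ Icc rs L ∧ r₂ - rs ≤ 2*R ∧ r₂ ∈ Icc 0 L ∧ ∃ s₂ ∈ Icc (0:ℝ) T,
        dist (α s₂) (lam r₂) ≤ R + ε ∧
        ∀ g₃ : ℝ → X, IsGeodesicFrom g₃ (α s₂) (lam r₂) →
          ∀ w ∈ geodImage g₃ (α s₂) (lam r₂), R - ε ≤ dist m w := by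
      by_cases hc : L - rs ≤ 2*R
      · refine ⟨L, ⟨hrs.2, le_refl _⟩, by linarith, ⟨hrs.1.trans hrs.2, le_refl _⟩,
          T, ⟨hT, le_refl _⟩, ?_, ?_⟩
        · have h0 : lam L = α T := by rw [hlam.2.1, hαT]
          rw [h0, dist_self]; positivity
        · intro g₃ hg₃ w hw
          have h0 : lam L = α T := by rw [hlam.2.1, hαT]
          obtain ⟨θ, hθ, rfl⟩ := hw
          have hz : dist (α T) (lam L) = 0 := by rw [h0, dist_self]
          rw [hz] at hθ
          have hθ0 : θ = 0 := le_antisymm hθ.2 hθ.1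
          rw [hθ0, hg₃.1]
          linarith [hfar T ⟨hT, le_refl _⟩]
      · push_neg at hc
        set r₂ := rs + 2*R with hr₂def
        have hr₂ : r₂ ∈ Icc 0 L := ⟨by simp only [hr₂def]; linarith [hrs.1],
          by simp only [hr₂def]; linarith⟩
        have hfr₂ : f r₂ ≤ R := hmax hr₂
        obtain ⟨w, hwA, hdw⟩ := exists_near_of_infDist hAne hfr₂ hε
        obtain ⟨s₂, hs₂, rfl⟩ := hwA
        have hmr₂ : dist m (lam r₂) = 2*R := by
          rw [hlam.2.2 rs hrs r₂ hr₂]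
          rw [abs_of_nonpos (by simp only [hr₂def]; linarith)]
          simp only [hr₂def]; ring
        refine ⟨r₂, ⟨by simp only [hr₂def]; linarith, hr₂.2⟩,
          by simp only [hr₂def]; linarith, hr₂, s₂, hs₂, by rw [dist_comm]; exact hdw.le, ?_⟩
        intro g₃ hg₃ w hw
        obtain ⟨θ, hθ, rfl⟩ := hw
        have h1 : dist (g₃ θ) (lam r₂) = dist (α s₂) (lam r₂) - θ := geod_dist_end hg₃ hθ
        have h2 := dist_triangle m (g₃ θ) (lam r₂)
        have h3 : dist (lam r₂) (g₃ θ) = dist (g₃ θ) (lam r₂) := dist_comm _ _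
        have h4 : dist (α s₂) (lam r₂) ≤ R + ε := by rw [dist_comm]; exact hdw.le
        linarith [hθ.1]
    obtain ⟨r₁, hr₁rs, hr₁2R, hr₁L, s₁, hs₁, hd₁, hLfar⟩ := left
    obtain ⟨r₂, hr₂rs, hr₂2R, hr₂L, s₂, hs₂, hd₃, hRfar⟩ := right
    obtain ⟨g₁, hg₁⟩ := hGeo (lam r₁) (α s₁)
    obtain ⟨g₃, hg₃⟩ := hGeo (α s₂) (lam r₂)
    obtain ⟨p₁, hp₁0, hp₁e, hp₁s, hp₁m⟩ := geod_subdiv_chain hg₁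
    obtain ⟨p₂, hp₂0, hp₂e, hp₂s, hp₂m⟩ := qg_sample_chain hk hqgu hs₁ hs₂
    obtain ⟨p₃, hp₃0, hp₃e, hp₃s, hp₃m⟩ := geod_subdiv_chain hg₃
    set n₁ := ⌈dist (lam r₁) (α s₁)⌉₊ with hn₁
    set n₂ := ⌈|s₂ - s₁|⌉₊ with hn₂
    set n₃ := ⌈dist (α s₂) (lam r₂)⌉₊ with hn₃
    have hk0 : (0:ℝ) < k := by linarith
    have h2k : (1:ℝ) ≤ 2*k := by linarith
    have hp₁s' : ∀ j, j+1 ≤ n₁ → dist (p₁ j) (p₁ (j+1)) ≤ 2*k :=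
      fun j h => le_trans (hp₁s j h) h2k
    have hp₃s' : ∀ j, j+1 ≤ n₃ → dist (p₃ j) (p₃ (j+1)) ≤ 2*k :=
      fun j h => le_trans (hp₃s j h) h2k
    obtain ⟨p₄, hp₄0, hp₄e, hp₄s, hp₄m⟩ :=
      chain_append (c := 2*k) (hp₁e.trans hp₂0.symm) hp₁s' hp₂s
    obtain ⟨p₅, hp₅0, hp₅e, hp₅s, hp₅m⟩ :=
      chain_append (c := 2*k) ((hp₄e.trans hp₂e).trans hp₃0.symm) hp₄s hp₃s'
    set N := n₁ + n₂ + n₃ with hN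
    have e0 : p₅ 0 = lam r₁ := by rw [hp₅0, hp₄0, hp₁0]
    have eN : p₅ N = lam r₂ := hp₅e.trans hp₃e
    have hfarchain : ∀ j, j ≤ N → R - ε ≤ dist m (p₅ j) := by
      intro j hj
      rcases hp₅m j hj with ⟨i, hi, he⟩ | ⟨i, hi, he⟩
      · rcases hp₄m i hi with ⟨i', hi', he'⟩ | ⟨i', hi', he'⟩
        · rw [he, he']
          exact hLfar g₁ hg₁ _ (hp₁m i')
        · rw [he, he']
          obtain ⟨s, hs, hes⟩ := hp₂m i'
          rw [hes]
          linarith [hfar s hs]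
      · rw [he]
        exact hRfar g₃ hg₃ _ (hp₃m i)
    have hr₁₂ : r₁ ≤ r₂ := le_trans hr₁rs.2 hr₂rs.1
    obtain ⟨hdist₁₂, hsub⟩ := hlam.subseg hr₁L hr₂L hr₁₂
    have hmmem : m ∈ geodImage (fun u => lam (r₁ + u)) (lam r₁) (lam r₂) := by
      refine ⟨rs - r₁, ⟨by linarith [hr₁rs.2], by rw [hdist₁₂]; linarith [hr₂rs.1]⟩, ?_⟩
      show lam (r₁ + (rs - r₁)) = m
      simp only [hm]
      congr 1; ring
    rw [← e0, ← eN] at hsub hmmem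
    have hN2 : N ≤ 2^(N.log2 + 1) := Nat.lt_log2_self.le
    obtain ⟨i, hiN, hib⟩ := chain_log hδ hGeo hHyp (by linarith : (0:ℝ) ≤ 2*k) hε
      (N.log2+1) N hN2 p₅ hp₅s (fun u => lam (r₁ + u)) hsub m hmmem
    have hfi := hfarchain i hiN
    have hc₁ : (n₁:ℝ) < dist (lam r₁) (α s₁) + 1 := Nat.ceil_lt_add_one dist_nonneg
    have hc₂ : (n₂:ℝ) < |s₂ - s₁| + 1 := Nat.ceil_lt_add_one (abs_nonneg _)
    have hc₃ : (n₃:ℝ) < dist (α s₂) (lam r₂) + 1 := Nat.ceil_lt_add_one dist_nonneg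
    have hΔb : |s₁ - s₂| ≤ k * dist (α s₁) (α s₂) + k^2 := hqgl s₁ hs₁ s₂ hs₂
    have hd12 : dist (α s₁) (α s₂) ≤ (R+ε) + (r₂ - r₁) + (R+ε) := by
      have ht4 := dist_triangle4 (α s₁) (lam r₁) (lam r₂) (α s₂)
      have hcm : dist (α s₁) (lam r₁) = dist (lam r₁) (α s₁) := dist_comm _ _
      have hcm2 : dist (lam r₂) (α s₂) = dist (α s₂) (lam r₂) := dist_comm _ _
      linarith [hdist₁₂]
    have hrr : r₂ - r₁ ≤ 4*R := by linarith
    have habs : |s₂ - s₁| = |s₁ - s₂| := abs_sub_comm _ _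
    have hΔb' : |s₂ - s₁| ≤ k*(6*R + 2) + k^2 := by
      rw [habs]
      have hdle : dist (α s₁) (α s₂) ≤ 6*R+2 := by linarith
      calc |s₁ - s₂| ≤ k * dist (α s₁) (α s₂) + k^2 := hΔb
        _ ≤ k*(6*R+2) + k^2 :=
          add_le_add_left (mul_le_mul_of_nonneg_left hdle hk0.le) _
    have hNle : (N:ℝ) ≤ a*R + b := by
      have hcast : (N:ℝ) = (n₁:ℝ) + (n₂:ℝ) + (n₃:ℝ) := by
        simp only [hN]; push_cast; ring
      rw [hcast]
      simp only [ha, hb]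
      linarith [hc₁, hc₂, hc₃, hd₁, hd₃, hΔb', hε1]
    have hlogN : ((N.log2 : ℕ):ℝ) ≤ Real.logb 2 (a*R + b) := by
      by_cases hN0 : N = 0
      · simp [hN0]
        exact hlogb0
      · have h1 : (2:ℕ)^(N.log2) ≤ N := Nat.log2_self_le hN0
        have h1' : (2:ℝ)^(N.log2) ≤ (N:ℝ) := by exact_mod_cast h1
        have h2 : Real.logb 2 ((2:ℝ)^(N.log2)) = N.log2 := by
          rw [Real.logb_pow]; simp [Real.logb_self_eq_one]
        rw [← h2]
        exact Real.logb_le_logb_of_le one_lt_two (by positivity) (le_trans h1' hNle)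
    have hdG : ((N.log2 + 1 : ℕ):ℝ) ≤ G := by
      push_cast
      simp only [hG]
      linarith
    have hδε : (0:ℝ) ≤ δ + ε := by linarith
    calc R - ε ≤ dist m (p₅ i) := hfi
      _ ≤ (δ+ε)*((N.log2+1 : ℕ):ℝ) + 2*k := hib
      _ ≤ (δ+ε)*G + 2*k :=
          add_le_add_left (mul_le_mul_of_nonneg_left hdG hδε) _
  -- limit argument
  apply le_of_forall_pos_le_add
  intro ε₀ hε₀
  have hGpos : 0 < G + 1 := by linarith
  set ε := min 1 (ε₀/(G+1)) with hε
  have hεpos : 0 < ε := lt_min one_pos (by positivity)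
  have hk1 := key ε hεpos (min_le_left _ _)
  have hεle : ε*(G+1) ≤ ε₀ := by
    have h1 : ε ≤ ε₀/(G+1) := min_le_right _ _
    have h2 : (ε₀/(G+1))*(G+1) = ε₀ := by field_simp
    nlinarith
  nlinarith

end MorseA

section MorseB
variable {X : Type*} [MetricSpace X]

lemma qg_near_geod {δ k : ℝ} (hδ : 0 ≤ δ) (hk : 1 ≤ k)
    (hGeo : GeodesicMetricSpace X) (hHyp : DeltaHyp X δ)
    {D₀ : ℝ} (hD₀0 : 0 ≤ D₀)
    (hD₀ : ∀ R : ℝ, 0 ≤ R →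
      R ≤ δ*(Real.logb 2 ((6*k+2)*R + (k^2+2*k+5)) + 1) + 2*k → R ≤ D₀)
    {x y : X} {α : ℝ → X} {T : ℝ} (hT : 0 ≤ T) (hα0 : α 0 = x) (hαT : α T = y)
    (hqgl : ∀ s ∈ Icc (0:ℝ) T, ∀ t ∈ Icc (0:ℝ) T, |s - t| ≤ k * dist (α s) (α t) + k^2)
    (hqgu : ∀ s ∈ Icc (0:ℝ) T, ∀ t ∈ Icc (0:ℝ) T, dist (α s) (α t) ≤ k * |s - t| + k)
    {lam : ℝ → X} (hlam : IsGeodesicFrom lam x y) :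
    ∀ t ∈ Icc (0:ℝ) T, infDist (α t) (geodImage lam x y) ≤ (2*k^2+1)*D₀ + k^3 + k := by
  intro t ht
  have hk0 : (0:ℝ) < k := by linarith
  set P₁ := α '' Icc 0 t with hP₁
  set P₂ := α '' Icc t T with hP₂
  have hsplit : α '' Icc 0 T = P₁ ∪ P₂ := by
    rw [hP₁, hP₂, ← image_union, Icc_union_Icc_eq_Icc ht.1 ht.2]
  have hstepA := geod_near_qg hδ hk hGeo hHyp hD₀ hT hα0 hαT hqgl hqgu hlam
  have hxP₁ : x ∈ P₁ := ⟨0, ⟨le_refl _, ht.1⟩, hα0⟩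
  have hyP₂ : y ∈ P₂ := ⟨T, ⟨ht.2, le_refl _⟩, hαT⟩
  obtain ⟨rb, hrb, heq⟩ := exists_transition hlam P₁ P₂ hxP₁ hyP₂
  have hu := hstepA rb hrb
  rw [hsplit] at hu
  have hune : (P₁ ∪ P₂).Nonempty := ⟨x, Or.inl hxP₁⟩
  have h₁ : infDist (lam rb) P₁ ≤ D₀ := by
    apply le_of_forall_pos_le_add
    intro ε hε
    obtain ⟨w, hw, hd⟩ := exists_near_of_infDist hune hu hε
    rcases hw with hw | hw
    · exact le_trans (infDist_le_dist_of_mem hw) hd.le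
    · rw [heq]; exact le_trans (infDist_le_dist_of_mem hw) hd.le
  have h₂ : infDist (lam rb) P₂ ≤ D₀ := heq ▸ h₁
  apply le_of_forall_pos_le_add
  intro ε₀ hε₀
  have hden : (0:ℝ) < 2*k^2+1 := by positivity
  set ε := ε₀/(2*k^2+1) with hεdef
  have hε : 0 < ε := by positivity
  have hεeq : ε*(2*k^2+1) = ε₀ := by rw [hεdef]; field_simp
  have hP₁ne : P₁.Nonempty := ⟨x, hxP₁⟩
  have hP₂ne : P₂.Nonempty := ⟨y, hyP₂⟩
  obtain ⟨w₁, hw₁, hdw₁⟩ := exists_near_of_infDist hP₁ne h₁ hε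
  obtain ⟨w₂, hw₂, hdw₂⟩ := exists_near_of_infDist hP₂ne h₂ hε
  obtain ⟨s₁, hs₁, rfl⟩ := hw₁
  obtain ⟨s₂, hs₂, rfl⟩ := hw₂
  have hs₁T : s₁ ∈ Icc (0:ℝ) T := ⟨hs₁.1, le_trans hs₁.2 ht.2⟩
  have hs₂T : s₂ ∈ Icc (0:ℝ) T := ⟨le_trans ht.1 hs₂.1, hs₂.2⟩
  have h12 : dist (α s₁) (α s₂) ≤ 2*D₀ + 2*ε := by
    have h3 := dist_triangle (α s₁) (lam rb) (α s₂)
    have h4 : dist (α s₁) (lam rb) = dist (lam rb) (α s₁) := dist_comm _ _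
    linarith
  have hss : s₂ - s₁ ≤ k*(2*D₀+2*ε) + k^2 := by
    have := hqgl s₁ hs₁T s₂ hs₂T
    have habs : s₂ - s₁ ≤ |s₁ - s₂| := by
      rw [abs_sub_comm]; exact le_abs_self _
    have := mul_le_mul_of_nonneg_left h12 hk0.le
    linarith [hqgl s₁ hs₁T s₂ hs₂T]
  have hts : |t - s₁| ≤ s₂ - s₁ := by
    rw [abs_of_nonneg (by linarith [hs₁.2])]
    linarith [hs₂.1]
  have e1 : dist (α t) (α s₁) ≤ k*(s₂ - s₁) + k := by
    have h5 := hqgu t ht s₁ hs₁T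
    have h6 := mul_le_mul_of_nonneg_left hts hk0.le
    linarith
  have e2 : k*(s₂ - s₁) ≤ k*(k*(2*D₀+2*ε)+k^2) := mul_le_mul_of_nonneg_left hss hk0.le
  have e3 : infDist (α t) (geodImage lam x y) ≤ dist (α t) (lam rb) :=
    infDist_le_dist_of_mem ⟨rb, hrb, rfl⟩
  have e4 : dist (α t) (lam rb) ≤ dist (α t) (α s₁) + dist (α s₁) (lam rb) := dist_triangle _ _ _
  have e5 : dist (α s₁) (lam rb) = dist (lam rb) (α s₁) := dist_comm _ _
  nlinarith [e1, e2, e3, e4, e5, hdw₁, hεeq]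

end MorseB

section D0
open Filter Asymptotics

lemma exists_D0 (δ k : ℝ) (hδ : 0 ≤ δ) (hk : 1 ≤ k) :
    ∃ D₀ : ℝ, 0 ≤ D₀ ∧ ∀ R : ℝ, 0 ≤ R →
      R ≤ δ*(Real.logb 2 ((6*k+2)*R + (k^2+2*k+5)) + 1) + 2*k → R ≤ D₀ := by
  set a := 6*k+2 with ha
  set b := k^2+2*k+5 with hb
  have ha1 : (1:ℝ) ≤ a := by simp only [ha]; nlinarith
  have hb1 : (1:ℝ) ≤ b := by simp only [hb]; nlinarith
  set c := δ / Real.log 2 with hc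
  have hlog2 : (0:ℝ) < Real.log 2 := Real.log_pos one_lt_two
  have hc0 : 0 ≤ c := div_nonneg hδ hlog2.le
  have habpos : (0:ℝ) < a + b := by linarith
  have hcpos : (0:ℝ) < c + 1 := by linarith
  set ε' := 1/(4*(a+b)*(c+1)) with hε'
  have hε'pos : 0 < ε' := by positivity
  have hlo := Real.isLittleO_log_id_atTop.def hε'pos
  rw [Filter.eventually_atTop] at hlo
  obtain ⟨y₀, hy₀⟩ := hlo
  clear_value a b c ε'
  refine ⟨max (max y₀ 1) (2*δ+4*k+1), le_trans (by linarith : (0:ℝ) ≤ 2*δ+4*k+1)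
    (le_max_right _ _), ?_⟩
  intro R hR0 hRle
  by_contra hcon
  push_neg at hcon
  have hR1 : 1 ≤ R := le_trans (le_trans (le_max_right y₀ 1) (le_max_left _ _)) hcon.le
  have hRy₀ : y₀ ≤ R := le_trans (le_trans (le_max_left y₀ 1) (le_max_left _ _)) hcon.le
  have hRbig : 2*δ+4*k+1 ≤ R := le_trans (le_max_right _ _) hcon.le
  have hvge : R ≤ a*R+b := by nlinarith
  have hpos : (0:ℝ) < a*R+b := by nlinarith
  have hlog := hy₀ (a*R+b) (le_trans hRy₀ hvge)
  have h1 : Real.log (a*R+b) ≤ ε' * (a*R+b) := by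
    have h1a : Real.log (a*R+b) ≤ ‖Real.log (a*R+b)‖ := le_abs_self _
    have h1b : ‖id (a*R+b)‖ = a*R+b := by
      simp [Real.norm_eq_abs, abs_of_pos hpos]
    rw [h1b] at hlog
    linarith
  have h2 : δ * Real.logb 2 (a*R+b) = c * Real.log (a*R+b) := by
    rw [Real.logb, hc]
    field_simp
  have h3 : a*R+b ≤ 2*(a+b)*R := by nlinarith
  have h4 : c * Real.log (a*R+b) ≤ R/2 := by
    have e1 : c * Real.log (a*R+b) ≤ c * (ε' * (2*(a+b)*R)) := by
      apply mul_le_mul_of_nonneg_left _ hc0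
      exact le_trans h1 (mul_le_mul_of_nonneg_left h3 hε'pos.le)
    have e2 : c * (ε' * (2*(a+b)*R)) = (c/(c+1)) * (R/2) := by
      rw [hε']
      field_simp
      ring
    have e3 : (c/(c+1)) * (R/2) ≤ R/2 := by
      have : c/(c+1) ≤ 1 := by rw [div_le_one hcpos]; linarith
      nlinarith
    linarith
  have h5 : δ * (Real.logb 2 (a*R+b) + 1) + 2*k = c * Real.log (a*R+b) + δ + 2*k := by
    rw [mul_add, mul_one, h2]
  rw [h5] at hRle
  linarith

end D0

section Dir1
variable {X : Type*} [MetricSpace X]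

lemma dir1 {δ K k : ℝ} (hδ : 0 ≤ δ) (hK : 0 ≤ K) (hk : 1 ≤ k)
    (hGeo : GeodesicMetricSpace X) (hHyp : DeltaHyp X δ)
    {U : Set X} (hU : QuasiconvexSet K U) {P : X → X} (hP : ∀ z : X, IsNPProj z U (P z))
    {D₀ : ℝ} (hD₀0 : 0 ≤ D₀)
    (hD₀ : ∀ R : ℝ, 0 ≤ R →
      R ≤ δ*(Real.logb 2 ((6*k+2)*R + (k^2+2*k+5)) + 1) + 2*k → R ≤ D₀)
    {x y : X} {α : ℝ → X} {T : ℝ} (hT : 0 ≤ T) (hα0 : α 0 = x) (hαT : α T = y)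
    (hqgl : ∀ s ∈ Icc (0:ℝ) T, ∀ t ∈ Icc (0:ℝ) T, |s - t| ≤ k * dist (α s) (α t) + k^2)
    (hqgu : ∀ s ∈ Icc (0:ℝ) T, ∀ t ∈ Icc (0:ℝ) T, dist (α s) (α t) ≤ k * |s - t| + k)
    {γ : ℝ → X} (hγ : IsGeodesicFrom γ (P x) (P y)) :
    ∀ t ∈ Icc (0:ℝ) T, infDist (P (α t)) (geodImage γ (P x) (P y)) ≤
      2*((2*k^2+1)*D₀+k^3+k) + (4*δ+2*K) + (8*δ+4*K) := by
  intro t ht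
  obtain ⟨lam, hlam⟩ := hGeo x y
  have hB := qg_near_geod hδ hk hGeo hHyp hD₀0 hD₀ hT hα0 hαT hqgl hqgu hlam t ht
  apply le_of_forall_pos_le_add
  intro ε₀ hε₀
  have hε : 0 < ε₀/3 := by linarith
  obtain ⟨z', hz', hdz'⟩ := exists_near_of_infDist (geodImage_nonempty hlam) hB hε
  have hlip := proj_lipschitz hGeo hHyp hU (hP (α t)) (hP z')
  have hC₅ := proj_of_geod_pt hδ hK hGeo hHyp hU hP hlam hγ z' hz'
  obtain ⟨w, hw, hdw⟩ := exists_near_of_infDist (geodImage_nonempty hγ) hC₅ hε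
  have h1 : infDist (P (α t)) (geodImage γ (P x) (P y)) ≤ dist (P (α t)) w :=
    infDist_le_dist_of_mem hw
  have h2 : dist (P (α t)) w ≤ dist (P (α t)) (P z') + dist (P z') w := dist_triangle _ _ _
  linarith

end Dir1


set_option maxHeartbeats 1000000 in
/-- The nearest point projection of a `k`-quasi-geodesic onto a
closed `K`-quasiconvex subset `U` is uniformly Hausdorff-close to a geodesic
joining the projections of its endpoints. -/
theorem projection_of_quasigeodesic_close_to_geodesic (δ K k : ℝ)
    (hδ : 0 ≤ δ) (hK : 0 ≤ K) (hk : 1 ≤ k) :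
    ∃ D : ℝ, ∀ (X : Type*) [MetricSpace X],
      GeodesicMetricSpace X → DeltaHyp X δ →
      ∀ U : Set X, IsClosed U → QuasiconvexSet K U →
        ∀ P : X → X, (∀ z : X, IsNPProj z U (P z)) →
          ∀ (x y : X) (α : ℝ → X) (T : ℝ), 0 ≤ T →
            α 0 = x → α T = y →
            (∀ s ∈ Set.Icc (0 : ℝ) T, ∀ t ∈ Set.Icc (0 : ℝ) T,
              |s - t| / k - k ≤ dist (α s) (α t) ∧ dist (α s) (α t) ≤ k * |s - t| + k) →
            ∀ γ : ℝ → X, IsGeodesicFrom γ (P x) (P y) →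
              Metric.hausdorffDist (P '' (α '' Set.Icc 0 T))
                (geodImage γ (P x) (P y)) ≤ D := by
  classical
  obtain ⟨D₀, hD₀0, hD₀⟩ := exists_D0 δ k hδ hk
  have hk0 : (0:ℝ) < k := by linarith
  set D₂ := 2*((2*k^2+1)*D₀+k^3+k) + (4*δ+2*K) + (8*δ+4*K) with hD₂
  have hD₂0 : 0 ≤ D₂ := by
    have h1 : (0:ℝ) ≤ (2*k^2+1)*D₀ := by positivity
    have h2 : (0:ℝ) < k^3 + k := by positivity
    simp only [hD₂]; linarith
  refine ⟨3*D₂ + 4*k + (4*δ+2*K), ?_⟩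
  intro X _ hGeo hHyp U hUc hU P hP x y α T hT hα0 hαT hq γ hγ
  have hqgu : ∀ s ∈ Icc (0:ℝ) T, ∀ t ∈ Icc (0:ℝ) T, dist (α s) (α t) ≤ k*|s-t|+k :=
    fun s hs t ht => (hq s hs t ht).2
  have hqgl : ∀ s ∈ Icc (0:ℝ) T, ∀ t ∈ Icc (0:ℝ) T, |s-t| ≤ k*dist (α s) (α t) + k^2 := by
    intro s hs t ht
    have h := (hq s hs t ht).1
    have h2 : |s-t|/k ≤ dist (α s) (α t) + k := by linarith
    have h3 := mul_le_mul_of_nonneg_right h2 hk0.le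
    rw [div_mul_cancel₀ _ (ne_of_gt hk0)] at h3
    nlinarith
  have hdir1 := dir1 hδ hK hk hGeo hHyp hU hP hD₀0 hD₀ hT hα0 hαT hqgl hqgu hγ
  rw [← hD₂] at hdir1
  -- the sampling chain
  set N := ⌈T⌉₊ + 1 with hN
  have hN0 : 0 < N := by omega
  have hNr : (0:ℝ) < N := by exact_mod_cast hN0
  have hTN : T ≤ (N:ℝ) := by
    have := Nat.le_ceil T
    have h2 : ((⌈T⌉₊:ℕ):ℝ) ≤ ((N:ℕ):ℝ) := by exact_mod_cast (by omega : ⌈T⌉₊ ≤ N)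
    linarith
  set tfun : ℕ → ℝ := fun i => i*T/N with htfun
  have htmem : ∀ i : ℕ, i ≤ N → tfun i ∈ Icc (0:ℝ) T := by
    intro i hi
    have hiN : (i:ℝ) ≤ N := by exact_mod_cast hi
    constructor
    · simp only [htfun]; positivity
    · simp only [htfun]
      rw [div_le_iff₀ hNr]
      nlinarith
  have ht0 : tfun 0 = 0 := by simp [htfun]
  have htN : tfun N = T := by simp only [htfun]; field_simp
  have hq0 : P (α (tfun 0)) = P x := by rw [ht0, hα0]
  have hqN : P (α (tfun N)) = P y := by rw [htN, hαT]
  have hstep : ∀ i : ℕ, i + 1 ≤ N →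
      dist (P (α (tfun i))) (P (α (tfun (i+1)))) ≤ 4*k + (4*δ+2*K) := by
    intro i hi
    have h1 := proj_lipschitz hGeo hHyp hU (hP (α (tfun i))) (hP (α (tfun (i+1))))
    have h2 := hqgu _ (htmem i (by omega)) _ (htmem (i+1) hi)
    have h3 : |tfun i - tfun (i+1)| = T/N := by
      simp only [htfun]
      have hcast : ((i+1:ℕ):ℝ) = (i:ℝ)+1 := by push_cast; ring
      have he : (i:ℝ)*T/(N:ℝ) - ((i:ℝ)+1)*T/(N:ℝ) = -(T/(N:ℝ)) := by ring
      rw [hcast, he, abs_neg, abs_of_nonneg (by positivity)]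
    have h4 : T/N ≤ 1 := by rw [div_le_one hNr]; exact hTN
    have h5 : dist (α (tfun i)) (α (tfun (i+1))) ≤ 2*k := by
      rw [h3] at h2
      nlinarith
    linarith
  -- Direction 2
  have hdir2 : ∀ m ∈ geodImage γ (P x) (P y),
      infDist m (P '' (α '' Icc 0 T)) ≤ 3*D₂ + 4*k + (4*δ+2*K) := by
    intro m hm
    obtain ⟨r, hr, rfl⟩ := hm
    apply le_of_forall_pos_le_add
    intro ε₀ hε₀
    have hε : 0 < ε₀/3 := by linarith
    have hchoice : ∀ i : ℕ, i ≤ N → ∃ ρ, ρ ∈ Icc (0:ℝ) (dist (P x) (P y)) ∧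
        dist (γ ρ) (P (α (tfun i))) ≤ D₂ + ε₀/3 := by
      intro i hi
      obtain ⟨w, hw, hdw⟩ := exists_near_of_infDist (geodImage_nonempty hγ)
        (hdir1 _ (htmem i hi)) hε
      obtain ⟨ρ, hρ, rfl⟩ := hw
      exact ⟨ρ, hρ, by rw [dist_comm]; exact hdw.le⟩
    choose! ri hri₁ hri₂ using hchoice
    set rr : ℕ → ℝ := fun i => if i = 0 then 0 else if i = N then dist (P x) (P y) else ri i
      with hrr
    have hprop : ∀ i : ℕ, i ≤ N → rr i ∈ Icc (0:ℝ) (dist (P x) (P y)) ∧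
        dist (γ (rr i)) (P (α (tfun i))) ≤ D₂ + ε₀/3 := by
      intro i hi
      by_cases h0 : i = 0
      · subst h0
        constructor
        · simp [hrr]
        · have : rr 0 = 0 := by simp [hrr]
          rw [this, hγ.1, hq0, dist_self]
          linarith
      · by_cases hNN : i = N
        · subst hNN
          have : rr N = dist (P x) (P y) := by simp [hrr, h0]
          constructor
          · rw [this]; exact ⟨dist_nonneg, le_refl _⟩
          · rw [this, hγ.2.1, hqN, dist_self]
            linarith
        · have : rr i = ri i := by simp [hrr, h0, hNN]
          rw [this]
          exact ⟨hri₁ i hi, hri₂ i hi⟩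
    set istar := Nat.findGreatest (fun i => rr i ≤ r) N with histar
    have hbase : rr 0 ≤ r := by simp [hrr]; exact hr.1
    have hspec : rr istar ≤ r := Nat.findGreatest_spec (P := fun i => rr i ≤ r) (Nat.zero_le N) hbase
    have hle : istar ≤ N := Nat.findGreatest_le N
    have hmemS : P (α (tfun istar)) ∈ P '' (α '' Icc 0 T) :=
      ⟨α (tfun istar), ⟨tfun istar, htmem istar hle, rfl⟩, rfl⟩
    by_cases hiN : istar = N
    · -- r = dist (P x) (P y)
      have hrrN : rr N = dist (P x) (P y) := by
        simp [hrr, (by omega : N ≠ 0)]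
      have hLr : dist (P x) (P y) ≤ r := by rw [← hrrN, ← hiN]; exact hspec
      have hrL : r = dist (P x) (P y) := le_antisymm hr.2 hLr
      have hzero : dist (γ r) (P (α (tfun istar))) = 0 := by
        rw [hrL, hγ.2.1, hiN, hqN, dist_self]
      have := infDist_le_dist_of_mem (x := γ r) hmemS
      rw [hzero] at this
      linarith
    · have hlt : istar < N := lt_of_le_of_ne hle hiN
      have hng : ¬ (rr (istar+1) ≤ r) :=
        Nat.findGreatest_is_greatest (P := fun i => rr i ≤ r) (Nat.lt_succ_self istar) (by omega)
      push_neg at hng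
      obtain ⟨hm₁, hd₁⟩ := hprop istar hle
      obtain ⟨hm₂, hd₂⟩ := hprop (istar+1) (by omega)
      have hgd : dist (γ (rr (istar+1))) (γ (rr istar)) = |rr (istar+1) - rr istar| :=
        hγ.2.2 _ hm₂ _ hm₁
      have hdiff : rr (istar+1) - rr istar ≤ |rr (istar+1) - rr istar| := le_abs_self _
      have hq_step := hstep istar (by omega)
      have htri := dist_triangle4 (γ (rr (istar+1))) (P (α (tfun (istar+1))))
        (P (α (tfun istar))) (γ (rr istar))
      have hc1 : dist (P (α (tfun (istar+1)))) (P (α (tfun istar))) =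
          dist (P (α (tfun istar))) (P (α (tfun (istar+1)))) := dist_comm _ _
      have hc2 : dist (P (α (tfun istar))) (γ (rr istar)) =
          dist (γ (rr istar)) (P (α (tfun istar))) := dist_comm _ _
      have hγr : dist (γ r) (γ (rr istar)) = r - rr istar := by
        rw [hγ.2.2 r hr _ hm₁, abs_of_nonneg (by linarith)]
      have hfin : infDist (γ r) (P '' (α '' Icc 0 T)) ≤ dist (γ r) (P (α (tfun istar))) :=
        infDist_le_dist_of_mem hmemS
      have htri2 : dist (γ r) (P (α (tfun istar))) ≤
          dist (γ r) (γ (rr istar)) + dist (γ (rr istar)) (P (α (tfun istar))) :=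
        dist_triangle _ _ _
      linarith
  -- assemble
  apply hausdorffDist_le_of_infDist (by linarith)
  · intro p hp
    obtain ⟨w, ⟨t', ht', rfl⟩, rfl⟩ := hp
    have := hdir1 t' ht'
    linarith
  · exact hdir2
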